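/- Let x, y, z be elements of the graph group G_F. If y⁻¹x ∧ y⁻¹z = 1, then the joins involved are finite and (x ∧ z) ∨ (x ∧ y) ∨ (y ∧ z) = y. -/

import Mathlib

open Pointwise

namespace GraphGroupPaper

/-- The set of commutator relators: `gᵢ` and `gⱼ` commute for every pair of distinct
`i, j` with `{i,j} ∉ F`. -/
def Rels (k : ℕ) (F : Set (Sym2 (Fin k))) : Set (FreeGroup (Fin k)) :=
  {w | ∃ i j : Fin k, i ≠ j ∧ s(i, j) ∉ F ∧
      w = FreeGroup.of i * FreeGroup.of j * (FreeGroup.of i)⁻¹ * (FreeGroup.of j)⁻¹}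

/-- The graph group `G_F` with generators `g₁, …, g_k` and relations `gᵢgⱼ = gⱼgᵢ`
for all distinct `i, j` with `{i,j} ∉ F`. -/
abbrev Grp (k : ℕ) (F : Set (Sym2 (Fin k))) := PresentedGroup (Rels k F)

/-- The generator `gᵢ` of the graph group. -/
def gen (k : ℕ) (F : Set (Sym2 (Fin k))) (i : Fin k) : Grp k F :=
  PresentedGroup.of i

/-- The group element corresponding to a symbol: `(i, true)` stands for `gᵢ`,
`(i, false)` stands for `gᵢ⁻¹`. -/
def sym (k : ℕ) (F : Set (Sym2 (Fin k))) (α : Fin k × Bool) : Grp k F :=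
  if α.2 then gen k F α.1 else (gen k F α.1)⁻¹

/-- The product of the word `l` of symbols, as an element of the graph group. -/
def wordProd (k : ℕ) (F : Set (Sym2 (Fin k))) (l : List (Fin k × Bool)) : Grp k F :=
  (l.map (sym k F)).prod

/-- `|x|` : the length of a shortest word in the symbols representing `x`. -/
noncomputable def len {k : ℕ} {F : Set (Sym2 (Fin k))} (x : Grp k F) : ℕ :=
  sInf {n | ∃ l : List (Fin k × Bool), wordProd k F l = x ∧ l.length = n}

/-- The partial order on `G_F`:  `x ≤ y` iff `|y| = |x| + |x⁻¹y|`. -/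
def le {k : ℕ} {F : Set (Sym2 (Fin k))} (x y : Grp k F) : Prop :=
  len y = len x + len (x⁻¹ * y)

/-- `m` is the meet `x ∧ y` (greatest lower bound w.r.t. `le`). -/
def IsMeet {k : ℕ} {F : Set (Sym2 (Fin k))} (x y m : Grp k F) : Prop :=
  le m x ∧ le m y ∧ ∀ w, le w x → le w y → le w m

/-- `j` is the (finite) join `x ∨ y` (least upper bound w.r.t. `le`);
`x ∨ y` is finite iff such a `j` exists. -/
def IsJoin {k : ℕ} {F : Set (Sym2 (Fin k))} (x y j : Grp k F) : Prop :=
  le x j ∧ le y j ∧ ∀ w, le x w → le y w → le j w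

/-- `j` is the (finite) join of the set `S`. -/
def IsJoinSet {k : ℕ} {F : Set (Sym2 (Fin k))} (S : Set (Grp k F)) (j : Grp k F) : Prop :=
  (∀ s ∈ S, le s j) ∧ ∀ w, (∀ s ∈ S, le s w) → le j w

/-- `y` is a segment of `a` if `a = x·y·z` for some `x, z`. -/
def Segment {k : ℕ} {F : Set (Sym2 (Fin k))} (y a : Grp k F) : Prop :=
  ∃ x z, a = x * y * z ∧ len a = len x + len y + len z

/-- The left-invariant metric `dist(x,y) = |x⁻¹y|`. -/
noncomputable def dist {k : ℕ} {F : Set (Sym2 (Fin k))} (x y : Grp k F) : ℕ :=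
  len (x⁻¹ * y)

/-- A nonempty set `L` is convex if `x, z ∈ L` and `dist(x,y) + dist(y,z) = dist(x,z)`
imply `y ∈ L`. -/
def ConvexSet {k : ℕ} {F : Set (Sym2 (Fin k))} (L : Set (Grp k F)) : Prop :=
  L.Nonempty ∧ ∀ x z y : Grp k F, x ∈ L → z ∈ L →
    dist x y + dist y z = dist x z → y ∈ L

/-- An ideal: nonempty, downward closed, and closed under finite joins. -/
def IdealSet {k : ℕ} {F : Set (Sym2 (Fin k))} (I : Set (Grp k F)) : Prop :=
  I.Nonempty ∧ (∀ x ∈ I, ∀ y, le y x → y ∈ I) ∧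
    (∀ x ∈ I, ∀ y ∈ I, ∀ j, IsJoin x y j → j ∈ I)

/-- `H` is closed if both `H` and `H⁻¹` are ideals. -/
def ClosedSet {k : ℕ} {F : Set (Sym2 (Fin k))} (H : Set (Grp k F)) : Prop :=
  IdealSet H ∧ IdealSet H⁻¹

/-- `m` is a minimal element of `S` w.r.t. `le`. -/
def MinimalIn {k : ℕ} {F : Set (Sym2 (Fin k))} (S : Set (Grp k F)) (m : Grp k F) : Prop :=
  m ∈ S ∧ ∀ x ∈ S, le x m → x = m

/-- `l` is a reduced (i.e. shortest) word representing `x`. -/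
def MinWord {k : ℕ} {F : Set (Sym2 (Fin k))} (x : Grp k F) (l : List (Fin k × Bool)) : Prop :=
  wordProd k F l = x ∧ l.length = len x

open Classical in
/-- `#_α(x)`: the number of occurrences of the symbol `α` (not counting `α⁻¹`)
in a reduced word representing `x`. -/
noncomputable def symCount {k : ℕ} {F : Set (Sym2 (Fin k))} (α : Fin k × Bool)
    (x : Grp k F) : ℕ :=
  if h : ∃ l, MinWord x l then h.choose.count α else 0

/-- The symbol `α` occurs in `x`. -/
def Occurs {k : ℕ} {F : Set (Sym2 (Fin k))} (α : Fin k × Bool) (x : Grp k F) : Prop :=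
  0 < symCount α x

/-- `α` is a maximal symbol of `x`, i.e. `xα⁻¹ ≤ x`. -/
def MaxSym {k : ℕ} {F : Set (Sym2 (Fin k))} (α : Fin k × Bool) (x : Grp k F) : Prop :=
  le (x * (sym k F α)⁻¹) x

/-- A peak: an element with precisely one maximal symbol. -/
def IsPeak {k : ℕ} {F : Set (Sym2 (Fin k))} (p : Grp k F) : Prop :=
  ∃! α : Fin k × Bool, MaxSym α p

/-- An `α`-peak: a peak whose unique maximal symbol is `α`. -/
def AlphaPeak {k : ℕ} {F : Set (Sym2 (Fin k))} (α : Fin k × Bool) (p : Grp k F) : Prop :=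
  MaxSym α p ∧ ∀ β, MaxSym β p → β = α

/-- The set of generator indices occurring in `b`. -/
def Support {k : ℕ} {F : Set (Sym2 (Fin k))} (b : Grp k F) : Set (Fin k) :=
  {i | Occurs (i, true) b ∨ Occurs (i, false) b}

/-- `b` is connected: the generators occurring in `b` induce a connected subgraph of
the graph `([k], F)`. -/
def Conn {k : ℕ} {F : Set (Sym2 (Fin k))} (b : Grp k F) : Prop :=
  (SimpleGraph.induce (Support b) (SimpleGraph.fromEdgeSet F)).Connected

/-- `b` is cyclically reduced: `b ∧ b⁻¹ = 1`. -/
def CycRed {k : ℕ} {F : Set (Sym2 (Fin k))} (b : Grp k F) : Prop :=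
  IsMeet b b⁻¹ 1

----------------------------------------------------------------
-- Development
----------------------------------------------------------------

section Dev

variable {k : ℕ} {F : Set (Sym2 (Fin k))}

/-- inverse of a letter -/
def invL (α : Fin k × Bool) : Fin k × Bool := (α.1, !α.2)

@[simp] lemma invL_invL (α : Fin k × Bool) : invL (invL α) = α := by
  cases α with | mk i b => simp [invL]

@[simp] lemma invL_fst (α : Fin k × Bool) : (invL α).1 = α.1 := rfl

lemma invL_ne_iff {α β : Fin k × Bool} : invL α = β ↔ α = invL β := by
  constructor <;> rintro rfl <;> simp

/-- independence of letters -/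
def Ind (F : Set (Sym2 (Fin k))) (α β : Fin k × Bool) : Prop :=
  α.1 ≠ β.1 ∧ s(α.1, β.1) ∉ F

lemma Ind.symm {α β : Fin k × Bool} (h : Ind F α β) : Ind F β α := by
  obtain ⟨h1, h2⟩ := h
  refine ⟨h1.symm, ?_⟩
  rwa [Sym2.eq_swap]

@[simp] lemma Ind_invL_left {α β : Fin k × Bool} : Ind F (invL α) β ↔ Ind F α β := Iff.rfl

@[simp] lemma Ind_invL_right {α β : Fin k × Bool} : Ind F α (invL β) ↔ Ind F α β := Iff.rfl

lemma Ind.ne_invL {α β : Fin k × Bool} (h : Ind F α β) : β ≠ invL α := by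
  intro hh; subst hh; exact h.1 rfl

lemma not_Ind_self (α : Fin k × Bool) : ¬ Ind F α α := fun h => h.1 rfl

lemma not_Ind_invL (α : Fin k × Bool) : ¬ Ind F α (invL α) := fun h => h.1 rfl

lemma gen_commute {i j : Fin k} (hij : i ≠ j) (hF : s(i, j) ∉ F) :
    Commute (gen k F i) (gen k F j) := by
  have hr : (FreeGroup.of i * FreeGroup.of j * (FreeGroup.of i)⁻¹ * (FreeGroup.of j)⁻¹ :
      FreeGroup (Fin k)) ∈ Rels k F := ⟨i, j, hij, hF, rfl⟩
  have h1 : (QuotientGroup.mk (FreeGroup.of i * FreeGroup.of j * (FreeGroup.of i)⁻¹ *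
      (FreeGroup.of j)⁻¹) : Grp k F) = 1 :=
    (QuotientGroup.eq_one_iff _).mpr (Subgroup.subset_normalClosure hr)
  have : gen k F i * gen k F j * (gen k F i)⁻¹ * (gen k F j)⁻¹ = 1 := by
    simp only [gen, PresentedGroup.of, ← map_mul, ← map_inv]; exact h1
  have h3 : gen k F i * gen k F j * (gen k F i)⁻¹ = gen k F j := mul_inv_eq_one.mp this
  exact mul_inv_eq_iff_eq_mul.mp h3

lemma sym_commute {α β : Fin k × Bool} (h : Ind F α β) :
    Commute (sym k F α) (sym k F β) := by
  have hg : Commute (gen k F α.1) (gen k F β.1) := gen_commute h.1 h.2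
  have h1 : Commute (sym k F α) (gen k F β.1) := by
    rw [sym]; by_cases hb : α.2 <;> simp [hb, hg, hg.inv_left]
  conv_rhs => rw [sym]
  by_cases hb : β.2 <;> simp [hb, h1, h1.inv_right]

@[simp] lemma sym_invL (α : Fin k × Bool) : sym k F (invL α) = (sym k F α)⁻¹ := by
  by_cases hb : α.2 <;> simp [sym, invL, hb]

@[simp] lemma wordProd_nil : wordProd k F [] = 1 := rfl

@[simp] lemma wordProd_cons (α : Fin k × Bool) (l : List (Fin k × Bool)) :
    wordProd k F (α :: l) = sym k F α * wordProd k F l := by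
  simp [wordProd]

@[simp] lemma wordProd_append (l₁ l₂ : List (Fin k × Bool)) :
    wordProd k F (l₁ ++ l₂) = wordProd k F l₁ * wordProd k F l₂ := by
  simp [wordProd]

@[simp] lemma wordProd_singleton (α : Fin k × Bool) :
    wordProd k F [α] = sym k F α := by simp

/-- commuting a letter across an independent block -/
lemma commute_wordProd {α : Fin k × Bool} {l : List (Fin k × Bool)}
    (h : ∀ β ∈ l, Ind F α β) : Commute (sym k F α) (wordProd k F l) := by
  induction l with
  | nil => simp
  | cons β t ih =>
      rw [wordProd_cons]
      exact (sym_commute (h β (by simp))).mul_right (ih fun γ hγ => h γ (by simp [hγ]))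

/-- formal inverse of a word -/
def invW (l : List (Fin k × Bool)) : List (Fin k × Bool) := (l.map invL).reverse

@[simp] lemma invW_length (l : List (Fin k × Bool)) : (invW l).length = l.length := by
  simp [invW]

@[simp] lemma invW_nil : (invW ([] : List (Fin k × Bool))) = [] := rfl

lemma invW_append (l₁ l₂ : List (Fin k × Bool)) :
    invW (l₁ ++ l₂) = invW l₂ ++ invW l₁ := by simp [invW]

lemma invW_cons (α : Fin k × Bool) (l : List (Fin k × Bool)) :
    invW (α :: l) = invW l ++ [invL α] := by simp [invW]

@[simp] lemma wordProd_invW (l : List (Fin k × Bool)) :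
    wordProd k F (invW l) = (wordProd k F l)⁻¹ := by
  induction l with
  | nil => simp
  | cons α t ih => rw [invW_cons, wordProd_append, ih]; simp

@[simp] lemma invW_invW (l : List (Fin k × Bool)) : invW (invW l) = l := by
  simp [invW, List.map_reverse, List.map_map]
  have : invL ∘ invL = @id (Fin k × Bool) := by funext α; simp
  simp [this]

end Dev

section Dev2

variable {k : ℕ} {F : Set (Sym2 (Fin k))}

/-- one adjacent swap of independent letters -/
def Step (F : Set (Sym2 (Fin k))) (l l' : List (Fin k × Bool)) : Prop :=
  ∃ u v α β, Ind F α β ∧ l = u ++ α :: β :: v ∧ l' = u ++ β :: α :: v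

/-- swap-equivalence -/
def Eqv (F : Set (Sym2 (Fin k))) : List (Fin k × Bool) → List (Fin k × Bool) → Prop :=
  Relation.ReflTransGen (Step F)

lemma Step.symm {l l' : List (Fin k × Bool)} (h : Step F l l') : Step F l' l := by
  obtain ⟨u, v, α, β, hi, h1, h2⟩ := h
  exact ⟨u, v, β, α, hi.symm, h2, h1⟩

lemma Eqv.refl (l : List (Fin k × Bool)) : Eqv F l l := Relation.ReflTransGen.refl

lemma Eqv.trans {a b c : List (Fin k × Bool)} (h1 : Eqv F a b) (h2 : Eqv F b c) :
    Eqv F a c := Relation.ReflTransGen.trans h1 h2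

lemma Eqv.single {a b : List (Fin k × Bool)} (h : Step F a b) : Eqv F a b :=
  Relation.ReflTransGen.single h

lemma Eqv.symm {a b : List (Fin k × Bool)} (h : Eqv F a b) : Eqv F b a := by
  induction h with
  | refl => exact Eqv.refl _
  | tail _ hs ih => exact Eqv.trans (Eqv.single hs.symm) ih

lemma Step.perm {l l' : List (Fin k × Bool)} (h : Step F l l') : l.Perm l' := by
  obtain ⟨u, v, α, β, _, h1, h2⟩ := h
  subst h1; subst h2
  exact List.Perm.append_left u (List.Perm.swap β α v)

lemma Eqv.perm {l l' : List (Fin k × Bool)} (h : Eqv F l l') : l.Perm l' := by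
  induction h with
  | refl => exact List.Perm.refl _
  | tail _ hs ih => exact ih.trans hs.perm

lemma Eqv.length_eq {l l' : List (Fin k × Bool)} (h : Eqv F l l') :
    l.length = l'.length := h.perm.length_eq

lemma Eqv.mem {l l' : List (Fin k × Bool)} (h : Eqv F l l') {α} (hα : α ∈ l) : α ∈ l' :=
  h.perm.mem_iff.mp hα

lemma Step.prod_eq {l l' : List (Fin k × Bool)} (h : Step F l l') :
    wordProd k F l = wordProd k F l' := by
  obtain ⟨u, v, α, β, hi, h1, h2⟩ := h
  subst h1; subst h2
  have := sym_commute (F := F) hi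
  simp [mul_assoc]
  rw [← mul_assoc (sym k F α), this.eq, mul_assoc]

lemma Eqv.prod_eq {l l' : List (Fin k × Bool)} (h : Eqv F l l') :
    wordProd k F l = wordProd k F l' := by
  induction h with
  | refl => rfl
  | tail _ hs ih => exact ih.trans hs.prod_eq

lemma Step.cons_congr (γ : Fin k × Bool) {l l' : List (Fin k × Bool)} (h : Step F l l') :
    Step F (γ :: l) (γ :: l') := by
  obtain ⟨u, v, α, β, hi, h1, h2⟩ := h
  exact ⟨γ :: u, v, α, β, hi, by simp [h1], by simp [h2]⟩

lemma Eqv.cons_congr (γ : Fin k × Bool) {l l' : List (Fin k × Bool)} (h : Eqv F l l') :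
    Eqv F (γ :: l) (γ :: l') := by
  induction h with
  | refl => exact Eqv.refl _
  | tail _ hs ih => exact ih.trans (Eqv.single (hs.cons_congr γ))

lemma Eqv.append_left (u : List (Fin k × Bool)) {l l' : List (Fin k × Bool)}
    (h : Eqv F l l') : Eqv F (u ++ l) (u ++ l') := by
  induction u with
  | nil => exact h
  | cons γ t ih => exact ih.cons_congr γ

lemma Step.append_right {l l' : List (Fin k × Bool)} (h : Step F l l')
    (v : List (Fin k × Bool)) : Step F (l ++ v) (l' ++ v) := by
  obtain ⟨u, w, α, β, hi, h1, h2⟩ := h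
  exact ⟨u, w ++ v, α, β, hi, by simp [h1], by simp [h2]⟩

lemma Eqv.append_right {l l' : List (Fin k × Bool)} (h : Eqv F l l')
    (v : List (Fin k × Bool)) : Eqv F (l ++ v) (l' ++ v) := by
  induction h with
  | refl => exact Eqv.refl _
  | tail _ hs ih => exact ih.trans (Eqv.single (hs.append_right v))

lemma Eqv.append_congr {a b c d : List (Fin k × Bool)} (h1 : Eqv F a b)
    (h2 : Eqv F c d) : Eqv F (a ++ c) (b ++ d) :=
  (h1.append_right c).trans (Eqv.append_left b h2)

/-- shuffling an independent letter to the front of a block -/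
lemma shuffle {δ : Fin k × Bool} {u : List (Fin k × Bool)} (h : ∀ β ∈ u, Ind F δ β)
    (v : List (Fin k × Bool)) : Eqv F (u ++ δ :: v) (δ :: (u ++ v)) := by
  induction u with
  | nil => exact Eqv.refl _
  | cons γ t ih =>
      have h1 : Eqv F (γ :: (t ++ δ :: v)) (γ :: δ :: (t ++ v)) :=
        (ih fun β hβ => h β (by simp [hβ])).cons_congr γ
      have h2 : Step F (γ :: δ :: (t ++ v)) (δ :: γ :: (t ++ v)) :=
        ⟨[], t ++ v, γ, δ, (h γ (by simp)).symm, by simp, by simp⟩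
      simpa using h1.trans (Eqv.single h2)

/-- `Bad l`: l contains a cancelling pair separated by an independent block. -/
def Bad (F : Set (Sym2 (Fin k))) (l : List (Fin k × Bool)) : Prop :=
  ∃ a b c γ, l = a ++ γ :: (b ++ invL γ :: c) ∧ ∀ β ∈ b, Ind F γ β

def Red (F : Set (Sym2 (Fin k))) (l : List (Fin k × Bool)) : Prop := ¬ Bad F l

lemma Red.nil : Red F [] := by
  rintro ⟨a, b, c, γ, h, -⟩
  have := congrArg List.length h
  simp at this

lemma Red.singleton (α : Fin k × Bool) : Red F [α] := by
  rintro ⟨a, b, c, γ, h, -⟩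
  have := congrArg List.length h
  simp at this
  omega

lemma Bad.append_left {l : List (Fin k × Bool)} (h : Bad F l) (u : List (Fin k × Bool)) :
    Bad F (u ++ l) := by
  obtain ⟨a, b, c, γ, h1, h2⟩ := h
  exact ⟨u ++ a, b, c, γ, by simp [h1], h2⟩

lemma Bad.append_right {l : List (Fin k × Bool)} (h : Bad F l) (v : List (Fin k × Bool)) :
    Bad F (l ++ v) := by
  obtain ⟨a, b, c, γ, h1, h2⟩ := h
  exact ⟨a, b, c ++ v, γ, by simp [h1], h2⟩

lemma Red.of_append_left {u v : List (Fin k × Bool)} (h : Red F (u ++ v)) : Red F u :=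
  fun hb => h (hb.append_right v)

lemma Red.of_append_right {u v : List (Fin k × Bool)} (h : Red F (u ++ v)) : Red F v :=
  fun hb => h (hb.append_left u)

lemma Red.of_cons {γ : Fin k × Bool} {l : List (Fin k × Bool)} (h : Red F (γ :: l)) :
    Red F l := Red.of_append_right (u := [γ]) (by simpa using h)

/-- deleting a bad pair preserves the product -/
lemma bad_delete_prod {a b c : List (Fin k × Bool)} {γ : Fin k × Bool}
    (hb : ∀ β ∈ b, Ind F γ β) :
    wordProd k F (a ++ γ :: (b ++ invL γ :: c)) = wordProd k F (a ++ (b ++ c)) := by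
  have h1 : Eqv F (γ :: (b ++ invL γ :: c)) (b ++ γ :: invL γ :: c) :=
    (shuffle (δ := γ) hb (invL γ :: c)).symm
  have h2 : wordProd k F (γ :: (b ++ invL γ :: c)) = wordProd k F (b ++ c) := by
    rw [h1.prod_eq]
    simp [← mul_assoc]
  calc wordProd k F (a ++ γ :: (b ++ invL γ :: c))
      = wordProd k F a * wordProd k F (γ :: (b ++ invL γ :: c)) := by simp
    _ = wordProd k F a * wordProd k F (b ++ c) := by rw [h2]
    _ = wordProd k F (a ++ (b ++ c)) := by simp

end Dev2

section Dev3

variable {k : ℕ} {F : Set (Sym2 (Fin k))}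

lemma mk_listProd (L : List ((Fin k) × Bool)) :
    PresentedGroup.mk (Rels k F) (FreeGroup.mk L) = wordProd k F L := by
  induction L with
  | nil =>
      have : (FreeGroup.mk [] : FreeGroup (Fin k)) = 1 := by
        rw [← FreeGroup.one_eq_mk]
      rw [this, map_one, wordProd_nil]
  | cons α t ih =>
      have h1 : (FreeGroup.mk (α :: t) : FreeGroup (Fin k)) =
          FreeGroup.mk [α] * FreeGroup.mk t := by
        rw [FreeGroup.mul_mk]; rfl
      rw [h1, map_mul, ih, wordProd_cons]
      congr 1
      obtain ⟨i, b⟩ := α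
      cases b
      · have h2 : (FreeGroup.mk [(i, false)] : FreeGroup (Fin k)) = (FreeGroup.of i)⁻¹ := by
          rw [show (FreeGroup.of i : FreeGroup (Fin k)) = FreeGroup.mk [(i, true)] from rfl,
            FreeGroup.inv_mk]
          simp [FreeGroup.invRev]
        rw [h2, map_inv]
        rfl
      · rfl

lemma exists_rep (g : Grp k F) : ∃ l, wordProd k F l = g := by
  obtain ⟨x, rfl⟩ := PresentedGroup.mk_surjective (Rels k F) g
  exact ⟨x.toWord, by rw [← mk_listProd, FreeGroup.mk_toWord]⟩

lemma len_le {g : Grp k F} {l : List (Fin k × Bool)} (h : wordProd k F l = g) :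
    len g ≤ l.length :=
  Nat.sInf_le (show l.length ∈ {n | ∃ l', wordProd k F l' = g ∧ l'.length = n} from ⟨l, h, rfl⟩)

lemma exists_min_rep (g : Grp k F) :
    ∃ l, wordProd k F l = g ∧ l.length = len g := by
  obtain ⟨l, hl⟩ := exists_rep g
  have hne : Set.Nonempty {n | ∃ l' : List (Fin k × Bool), wordProd k F l' = g ∧ l'.length = n} :=
    ⟨l.length, l, hl, rfl⟩
  exact Nat.sInf_mem hne

@[simp] lemma len_one : len (1 : Grp k F) = 0 :=
  Nat.le_antisymm (len_le (l := []) rfl) (Nat.zero_le _)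

lemma eq_one_of_len_eq_zero {g : Grp k F} (h : len g = 0) : g = 1 := by
  obtain ⟨l, hl, hlen⟩ := exists_min_rep g
  rw [h, List.length_eq_zero_iff] at hlen
  subst hlen
  exact hl.symm

lemma len_inv_le (g : Grp k F) : len g⁻¹ ≤ len g := by
  obtain ⟨l, hl, hlen⟩ := exists_min_rep g
  calc len g⁻¹ ≤ (invW l).length := len_le (by rw [wordProd_invW, hl])
    _ = len g := by rw [invW_length, hlen]

@[simp] lemma len_inv (g : Grp k F) : len g⁻¹ = len g :=
  Nat.le_antisymm (len_inv_le g) (by simpa using len_inv_le g⁻¹)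

lemma len_mul_le (a b : Grp k F) : len (a * b) ≤ len a + len b := by
  obtain ⟨la, hla, hlena⟩ := exists_min_rep a
  obtain ⟨lb, hlb, hlenb⟩ := exists_min_rep b
  calc len (a * b) ≤ (la ++ lb).length := len_le (by simp [hla, hlb])
    _ = len a + len b := by simp [hlena, hlenb]

lemma le_rfl' (g : Grp k F) : le g g := by
  unfold le; simp

lemma one_le' (g : Grp k F) : le 1 g := by
  unfold le; simp

lemma le_one' {g : Grp k F} (h : le g 1) : g = 1 := by
  unfold le at h
  simp at h
  exact eq_one_of_len_eq_zero (by omega)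

lemma le_antisymm' {a b : Grp k F} (h1 : le a b) (h2 : le b a) : a = b := by
  unfold le at h1 h2
  have h3 : len (a⁻¹ * b) = 0 := by omega
  have h4 := eq_one_of_len_eq_zero h3
  have : a * (a⁻¹ * b) = a * 1 := by rw [h4]
  simpa [← mul_assoc] using this.symm

lemma le_trans' {a b c : Grp k F} (h1 : le a b) (h2 : le b c) : le a c := by
  unfold le at h1 h2 ⊢
  have key : len (a⁻¹ * c) ≤ len (a⁻¹ * b) + len (b⁻¹ * c) := by
    calc len (a⁻¹ * c) = len ((a⁻¹ * b) * (b⁻¹ * c)) := by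
          congr 1; group
    _ ≤ _ := len_mul_le _ _
  have tri : len c ≤ len a + len (a⁻¹ * c) := by
    calc len c = len (a * (a⁻¹ * c)) := by congr 1; group
      _ ≤ len a + len (a⁻¹ * c) := len_mul_le _ _
  omega

lemma le_compose {a t g : Grp k F} (h1 : le a g) (h2 : le t (a⁻¹ * g)) :
    le (a * t) g ∧ le a (a * t) := by
  unfold le at h1 h2 ⊢
  have e1 : len ((a * t)⁻¹ * g) = len (t⁻¹ * (a⁻¹ * g)) := by congr 1; group
  have e2 : len (a⁻¹ * (a * t)) = len t := by congr 1; group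
  have tri1 : len (a * t) ≤ len a + len t := len_mul_le _ _
  have tri2 : len g ≤ len (a * t) + len ((a * t)⁻¹ * g) := by
    calc len g = len ((a * t) * ((a * t)⁻¹ * g)) := by congr 1; group
      _ ≤ _ := len_mul_le _ _
  rw [e1, e2]
  omega

lemma le_cancel {d w x : Grp k F} (h1 : le d w) (h2 : le w x) :
    le (d⁻¹ * w) (d⁻¹ * x) := by
  have h3 : le d x := le_trans' h1 h2
  unfold le at h1 h2 h3 ⊢
  have e1 : len ((d⁻¹ * w)⁻¹ * (d⁻¹ * x)) = len (w⁻¹ * x) := by congr 1; group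
  rw [e1]
  omega

lemma len_le_add_dist (a g : Grp k F) : len g ≤ len a + len (a⁻¹ * g) := by
  calc len g = len (a * (a⁻¹ * g)) := by congr 1; group
    _ ≤ _ := len_mul_le _ _

end Dev3

section Dev4

variable {k : ℕ} {F : Set (Sym2 (Fin k))}


lemma cons_middle_split {Λ : Type*} {u v x y : List Λ} {a : Λ} (h : u ++ v = x ++ a :: y) :
    (∃ y₁, u = x ++ a :: y₁ ∧ y = y₁ ++ v) ∨ (∃ x₁, v = x₁ ++ a :: y ∧ x = u ++ x₁) := by
  rcases List.append_eq_append_iff.mp h with ⟨t, ht1, ht2⟩ | ⟨t, ht1, ht2⟩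
  · exact Or.inr ⟨t, ht2, ht1⟩
  · rcases t with _ | ⟨b, t'⟩
    · right
      refine ⟨[], by simpa using ht2.symm, ?_⟩
      simp at ht1
      simp [ht1]
    · left
      simp at ht2
      obtain ⟨rfl, rfl⟩ := ht2
      exact ⟨t', by simpa using ht1, rfl⟩

open Classical in
/-- push a letter onto the front of a word, with cancellation -/
noncomputable def pushL (F : Set (Sym2 (Fin k))) (δ : Fin k × Bool) :
    List (Fin k × Bool) → List (Fin k × Bool)
  | [] => [δ]
  | β :: t => if β = invL δ then t else if Ind F δ β then β :: pushL F δ t else δ :: β :: t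

@[simp] lemma pushL_nil (δ : Fin k × Bool) : pushL F δ [] = [δ] := by rw [pushL]

lemma pushL_cons_delete {δ β : Fin k × Bool} (t : List (Fin k × Bool)) (h : β = invL δ) :
    pushL F δ (β :: t) = t := by rw [pushL, if_pos h]

lemma pushL_cons_ind {δ β : Fin k × Bool} (t : List (Fin k × Bool)) (h1 : β ≠ invL δ)
    (h2 : Ind F δ β) : pushL F δ (β :: t) = β :: pushL F δ t := by
  rw [pushL, if_neg h1, if_pos h2]

lemma pushL_cons_other {δ β : Fin k × Bool} (t : List (Fin k × Bool)) (h1 : β ≠ invL δ)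
    (h2 : ¬ Ind F δ β) : pushL F δ (β :: t) = δ :: β :: t := by
  rw [pushL, if_neg h1, if_neg h2]

lemma pushL_prod (δ : Fin k × Bool) (w : List (Fin k × Bool)) :
    wordProd k F (pushL F δ w) = sym k F δ * wordProd k F w := by
  induction w with
  | nil => simp
  | cons β t ih =>
      by_cases h1 : β = invL δ
      · rw [pushL_cons_delete t h1, h1]
        simp [← mul_assoc]
      · by_cases h2 : Ind F δ β
        · rw [pushL_cons_ind t h1 h2, wordProd_cons, wordProd_cons, ih, ← mul_assoc,
            ← (sym_commute h2).eq, mul_assoc]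
        · rw [pushL_cons_other t h1 h2]; simp

/-- the delete-decomposition predicate -/
def DelDec (F : Set (Sym2 (Fin k))) (δ : Fin k × Bool) (w : List (Fin k × Bool)) : Prop :=
  ∃ w₀ w₁, w = w₀ ++ invL δ :: w₁ ∧ ∀ β ∈ w₀, Ind F δ β

lemma pushL_shape (δ : Fin k × Bool) (w : List (Fin k × Bool)) :
    (∃ w₀ w₁, w = w₀ ++ invL δ :: w₁ ∧ (∀ β ∈ w₀, Ind F δ β) ∧ pushL F δ w = w₀ ++ w₁)
    ∨ (¬ DelDec F δ w ∧
       ∃ w₀ w₁, w = w₀ ++ w₁ ∧ (∀ β ∈ w₀, Ind F δ β) ∧ pushL F δ w = w₀ ++ δ :: w₁) := by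
  induction w with
  | nil =>
      right
      refine ⟨?_, [], [], by simp, by simp, by simp⟩
      rintro ⟨w₀, w₁, h, -⟩
      have := congrArg List.length h
      simp at this
  | cons β t ih =>
      by_cases h1 : β = invL δ
      · left
        exact ⟨[], t, by simp [h1], by simp, by simp [pushL_cons_delete t h1]⟩
      · by_cases h2 : Ind F δ β
        · rcases ih with ⟨w₀, w₁, ht, hind, hp⟩ | ⟨hnd, w₀, w₁, ht, hind, hp⟩
          · left
            refine ⟨β :: w₀, w₁, by simp [ht], ?_, by simp [pushL_cons_ind t h1 h2, hp]⟩
            intro γ hγ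
            rcases List.mem_cons.mp hγ with rfl | hγ
            · exact h2
            · exact hind γ hγ
          · right
            constructor
            · rintro ⟨u₀, u₁, hu, huind⟩
              rcases u₀ with _ | ⟨γ, u₀'⟩
              · simp at hu
                exact h1 hu.1
              · simp at hu
                obtain ⟨rfl, hu2⟩ := hu
                exact hnd ⟨u₀', u₁, hu2, fun γ' hγ' => huind γ' (by simp [hγ'])⟩
            · refine ⟨β :: w₀, w₁, by simp [ht], ?_, by simp [pushL_cons_ind t h1 h2, hp]⟩
              intro γ hγ
              rcases List.mem_cons.mp hγ with rfl | hγ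
              · exact h2
              · exact hind γ hγ
        · right
          constructor
          · rintro ⟨u₀, u₁, hu, huind⟩
            rcases u₀ with _ | ⟨γ, u₀'⟩
            · simp at hu
              exact h1 hu.1
            · simp at hu
              exact h2 (hu.1 ▸ huind γ (by simp))
          · exact ⟨[], β :: t, by simp, by simp, by simp [pushL_cons_other t h1 h2]⟩

lemma pushL_red {δ : Fin k × Bool} {w : List (Fin k × Bool)} (hw : Red F w) :
    Red F (pushL F δ w) := by
  rcases pushL_shape (F := F) δ w with ⟨w₀, w₁, hw', hind, hp⟩ | ⟨hnd, w₀, w₁, hw', hind, hp⟩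
  · -- delete case
    rw [hp]
    rintro ⟨a, b, c, γ, habc, hbind⟩
    apply hw
    subst hw'
    rcases cons_middle_split habc with ⟨y₁, hw₀, hbc⟩ | ⟨x₁, hw₁, ha⟩
    · rcases cons_middle_split hbc.symm with ⟨c₁, hy₁, hc⟩ | ⟨b₂, hw₁, hb⟩
      · -- pair entirely inside w₀
        refine ⟨a, b, c₁ ++ invL δ :: w₁, γ, ?_, hbind⟩
        rw [hw₀, hy₁]
        simp
      · -- pair spans : γ in w₀, invL γ in w₁
        refine ⟨a, y₁ ++ invL δ :: b₂, c, γ, ?_, ?_⟩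
        · rw [hw₀, hw₁]
          simp
        · intro β hβ
          simp at hβ
          rcases hβ with hβ | rfl | hβ
          · exact hbind β (by simp [hb, hβ])
          · have h5 : Ind F δ γ := hind γ (by simp [hw₀])
            simpa using h5.symm
          · exact hbind β (by simp [hb, hβ])
    · -- pair entirely inside w₁
      refine ⟨w₀ ++ invL δ :: x₁, b, c, γ, ?_, hbind⟩
      rw [hw₁]
      simp
  · -- insert case
    rw [hp]
    rintro ⟨a, b, c, γ, habc, hbind⟩
    rcases cons_middle_split habc with ⟨y₁, hw₀, hbc⟩ | ⟨x₁, hδw₁, ha⟩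
    · rcases cons_middle_split hbc.symm with ⟨c₁, hy₁, hc⟩ | ⟨b₂, hδw₁, hb⟩
      · -- pair entirely inside w₀
        apply hw
        refine ⟨a, b, c₁ ++ w₁, γ, ?_, hbind⟩
        rw [hw', hw₀, hy₁]
        simp
      · rcases b₂ with _ | ⟨ε, b₂'⟩
        · -- δ = invL γ, but γ ∈ w₀ is independent of δ : contradiction
          simp at hδw₁
          have h5 : Ind F δ γ := hind γ (by simp [hw₀])
          rw [hδw₁.1] at h5
          exact (not_Ind_self γ) (by simpa using h5)
        · -- pair spans the two halves of w
          simp at hδw₁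
          apply hw
          refine ⟨a, y₁ ++ b₂', c, γ, ?_, ?_⟩
          · rw [hw', hw₀, hδw₁.2]
            simp
          · intro β hβ
            simp at hβ
            rcases hβ with hβ | hβ
            · exact hbind β (by simp [hb, hβ])
            · exact hbind β (by simp [hb, hβ])
    · rcases x₁ with _ | ⟨ε, x₁'⟩
      · -- δ = γ : the pair gives a delete-decomposition of w
        simp at hδw₁
        apply hnd
        refine ⟨w₀ ++ b, c, ?_, ?_⟩
        · rw [hw', hδw₁.2, hδw₁.1]
          simp
        · intro β hβ
          rcases List.mem_append.mp hβ with hβ | hβ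
          · exact hind β hβ
          · exact hδw₁.1 ▸ hbind β hβ
      · -- pair entirely inside w₁
        simp at hδw₁
        apply hw
        refine ⟨w₀ ++ x₁', b, c, γ, ?_, hbind⟩
        rw [hw', hδw₁.2]
        simp

end Dev4

section Dev5

variable {k : ℕ} {F : Set (Sym2 (Fin k))}

lemma Ind.ne_invL' {δ ν : Fin k × Bool} (h : Ind F δ ν) : ν ≠ invL δ := by
  intro hh; subst hh; exact h.1 rfl

lemma pushL_swap (δ : Fin k × Bool) {μ ν : Fin k × Bool} (hμν : Ind F μ ν) :
    ∀ d e, Eqv F (pushL F δ (d ++ μ :: ν :: e)) (pushL F δ (d ++ ν :: μ :: e)) := by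
  intro d
  induction d with
  | nil =>
      intro e
      simp only [List.nil_append]
      by_cases h1 : μ = invL δ
      · have hν : ν ≠ invL δ := by
          intro hh
          exact hμν.1 (by rw [h1, hh])
        have hiν : Ind F δ ν := by
          have := hμν
          rw [h1] at this
          exact this
        rw [pushL_cons_delete _ h1, pushL_cons_ind _ hν hiν, pushL_cons_delete _ h1]
        exact Eqv.refl _
      · by_cases h2 : ν = invL δ
        · have hiμ : Ind F δ μ := by
            have := hμν.symm
            rw [h2] at this
            exact this
          rw [pushL_cons_ind _ h1 hiμ, pushL_cons_delete _ h2, pushL_cons_delete _ h2]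
          exact Eqv.refl _
        · by_cases h3 : Ind F δ μ <;> by_cases h4 : Ind F δ ν
          · rw [pushL_cons_ind _ h1 h3, pushL_cons_ind _ h2 h4,
              pushL_cons_ind _ h2 h4, pushL_cons_ind _ h1 h3]
            exact Eqv.single ⟨[], pushL F δ e, μ, ν, hμν, by simp, by simp⟩
          · have eL : pushL F δ (μ :: ν :: e) = μ :: δ :: ν :: e := by
              rw [pushL_cons_ind _ h1 h3, pushL_cons_other _ h2 h4]
            have eR : pushL F δ (ν :: μ :: e) = δ :: ν :: μ :: e :=
              pushL_cons_other _ h2 h4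
            rw [eL, eR]
            refine Eqv.trans (b := δ :: μ :: ν :: e)
              (Eqv.single ⟨[], ν :: e, μ, δ, h3.symm, rfl, rfl⟩) ?_
            exact Eqv.single ⟨[δ], e, μ, ν, hμν, rfl, rfl⟩
          · have eL : pushL F δ (μ :: ν :: e) = δ :: μ :: ν :: e :=
              pushL_cons_other _ h1 h3
            have eR : pushL F δ (ν :: μ :: e) = ν :: δ :: μ :: e := by
              rw [pushL_cons_ind _ h2 h4, pushL_cons_other _ h1 h3]
            rw [eL, eR]
            refine Eqv.trans (b := δ :: ν :: μ :: e)
              (Eqv.single ⟨[δ], e, μ, ν, hμν, rfl, rfl⟩) ?_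
            exact Eqv.single ⟨[], μ :: e, δ, ν, h4, rfl, rfl⟩
          · rw [pushL_cons_other _ h1 h3, pushL_cons_other _ h2 h4]
            exact Eqv.single ⟨[δ], e, μ, ν, hμν, by simp, by simp⟩
  | cons γ d' ih =>
      intro e
      simp only [List.cons_append]
      by_cases h1 : γ = invL δ
      · rw [pushL_cons_delete _ h1, pushL_cons_delete _ h1]
        exact Eqv.single ⟨d', e, μ, ν, hμν, rfl, rfl⟩
      · by_cases h2 : Ind F δ γ
        · rw [pushL_cons_ind _ h1 h2, pushL_cons_ind _ h1 h2]
          exact (ih e).cons_congr γ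
        · rw [pushL_cons_other _ h1 h2, pushL_cons_other _ h1 h2]
          exact Eqv.single ⟨δ :: γ :: d', e, μ, ν, hμν, by simp, by simp⟩

lemma pushL_eqv (δ : Fin k × Bool) {l l' : List (Fin k × Bool)} (h : Eqv F l l') :
    Eqv F (pushL F δ l) (pushL F δ l') := by
  induction h with
  | refl => exact Eqv.refl _
  | tail _ hs ih =>
      obtain ⟨u, v, α, β, hi, h1, h2⟩ := hs
      subst h1; subst h2
      exact ih.trans (pushL_swap δ hi u v)

lemma pushL_comm {δ ε : Fin k × Bool} (h : Ind F δ ε) (w : List (Fin k × Bool)) :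
    Eqv F (pushL F δ (pushL F ε w)) (pushL F ε (pushL F δ w)) := by
  have hεδ : ε ≠ invL δ := h.ne_invL'
  have hδε : δ ≠ invL ε := h.symm.ne_invL'
  induction w with
  | nil =>
      rw [pushL_nil, pushL_nil, pushL_cons_ind _ hεδ h, pushL_cons_ind _ hδε h.symm,
        pushL_nil, pushL_nil]
      exact Eqv.single ⟨[], [], ε, δ, h.symm, by simp, by simp⟩
  | cons β t ih =>
      by_cases h1 : β = invL δ
      · have h2 : β ≠ invL ε := by
          intro hh
          exact h.1 (by rw [← invL_fst δ, ← h1, hh, invL_fst])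
        have h3 : Ind F ε β := by
          rw [h1]
          exact h.symm
        rw [pushL_cons_ind _ h2 h3, pushL_cons_delete _ h1, pushL_cons_delete _ h1]
        exact Eqv.refl _
      · by_cases h2 : β = invL ε
        · have h3 : Ind F δ β := by
            rw [h2]
            exact h
          rw [pushL_cons_ind _ h1 h3, pushL_cons_delete _ h2, pushL_cons_delete _ h2]
          exact Eqv.refl _
        · by_cases h3 : Ind F δ β <;> by_cases h4 : Ind F ε β
          · have eL : pushL F δ (pushL F ε (β :: t)) = β :: pushL F δ (pushL F ε t) := by
              rw [pushL_cons_ind t h2 h4, pushL_cons_ind _ h1 h3]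
            have eR : pushL F ε (pushL F δ (β :: t)) = β :: pushL F ε (pushL F δ t) := by
              rw [pushL_cons_ind t h1 h3, pushL_cons_ind _ h2 h4]
            rw [eL, eR]
            exact ih.cons_congr β
          · have eL : pushL F δ (pushL F ε (β :: t)) = ε :: β :: pushL F δ t := by
              rw [pushL_cons_other t h2 h4, pushL_cons_ind _ hεδ h, pushL_cons_ind _ h1 h3]
            have eR : pushL F ε (pushL F δ (β :: t)) = ε :: β :: pushL F δ t := by
              rw [pushL_cons_ind t h1 h3, pushL_cons_other _ h2 h4]
            rw [eL, eR]
            exact Eqv.refl _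
          · have eL : pushL F δ (pushL F ε (β :: t)) = δ :: β :: pushL F ε t := by
              rw [pushL_cons_ind t h2 h4, pushL_cons_other _ h1 h3]
            have eR : pushL F ε (pushL F δ (β :: t)) = δ :: β :: pushL F ε t := by
              rw [pushL_cons_other t h1 h3, pushL_cons_ind _ hδε h.symm,
                pushL_cons_ind _ h2 h4]
            rw [eL, eR]
            exact Eqv.refl _
          · have eL : pushL F δ (pushL F ε (β :: t)) = ε :: δ :: β :: t := by
              rw [pushL_cons_other t h2 h4, pushL_cons_ind _ hεδ h,
                pushL_cons_other _ h1 h3]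
            have eR : pushL F ε (pushL F δ (β :: t)) = δ :: ε :: β :: t := by
              rw [pushL_cons_other t h1 h3, pushL_cons_ind _ hδε h.symm,
                pushL_cons_other _ h2 h4]
            rw [eL, eR]
            exact Eqv.single ⟨[], β :: t, ε, δ, h.symm, rfl, rfl⟩

lemma pushL_inv (δ : Fin k × Bool) {w : List (Fin k × Bool)} (hw : Red F w) :
    Eqv F (pushL F δ (pushL F (invL δ) w)) w := by
  induction w with
  | nil =>
      rw [pushL_nil, pushL_cons_delete _ rfl]
      exact Eqv.refl _
  | cons β t ih =>
      have ht : Red F t := hw.of_cons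
      by_cases h1 : β = δ
      · subst h1
        rw [pushL_cons_delete _ (by simp)]
        rcases pushL_shape (F := F) β t with ⟨t₀, t₁, ht', hind, hp⟩ | ⟨_, t₀, t₁, ht', hind, hp⟩
        · exact absurd ⟨[], t₀, t₁, β, by simp [ht'], hind⟩ hw
        · rw [hp, ht']
          exact shuffle hind t₁
      · by_cases h2 : Ind F δ β
        · have h3 : β ≠ invL (invL δ) := by simpa using h1
          rw [pushL_cons_ind _ h3 h2, pushL_cons_ind _ h2.ne_invL' h2]
          exact (ih ht).cons_congr β
        · have h3 : β ≠ invL (invL δ) := by simpa using h1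
          rw [pushL_cons_other _ h3 h2, pushL_cons_delete _ rfl]
          exact Eqv.refl _

end Dev5

section Dev6

variable (k : ℕ) (F : Set (Sym2 (Fin k)))

def RedW := {l : List (Fin k × Bool) // Red F l}

instance redSetoid : Setoid (RedW k F) :=
  ⟨fun a b => Eqv F a.1 b.1, fun _ => Eqv.refl _, Eqv.symm, Eqv.trans⟩

def TQ := Quotient (redSetoid k F)

variable {k F}

noncomputable def pushQ (δ : Fin k × Bool) : TQ k F → TQ k F :=
  Quotient.map (fun l => ⟨pushL F δ l.1, pushL_red l.2⟩) (fun _ _ hab => pushL_eqv δ hab)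

lemma pushQ_mk (δ : Fin k × Bool) (l : RedW k F) :
    pushQ δ (⟦l⟧ : TQ k F) = ⟦⟨pushL F δ l.1, pushL_red l.2⟩⟧ := rfl

lemma pushQ_inv_comp (δ : Fin k × Bool) (t : TQ k F) : pushQ δ (pushQ (invL δ) t) = t := by
  induction t using Quotient.ind with
  | _ l => exact Quotient.sound (pushL_inv δ l.2)

noncomputable def pushE (δ : Fin k × Bool) : Equiv.Perm (TQ k F) :=
  ⟨pushQ δ, pushQ (invL δ),
   fun t => by simpa using pushQ_inv_comp (invL δ) (by simpa using t),
   pushQ_inv_comp δ⟩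

lemma pushE_left_inv (δ : Fin k × Bool) (t : TQ k F) :
    pushQ (invL δ) (pushQ δ t) = t := by
  have := pushQ_inv_comp (invL δ) t
  rwa [invL_invL] at this

noncomputable def actF : Fin k → Equiv.Perm (TQ k F) := fun i => pushE (i, true)

lemma act_cond : ∀ r ∈ Rels k F, FreeGroup.lift (actF (k := k) (F := F)) r = 1 := by
  rintro r ⟨i, j, hij, hF, rfl⟩
  have hInd : Ind F ((i, true) : Fin k × Bool) (j, true) := ⟨by simpa using hij, hF⟩
  have hcomm : actF (F := F) i * actF (F := F) j = actF (F := F) j * actF (F := F) i := by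
    apply Equiv.ext
    intro t
    induction t using Quotient.ind with
    | _ l =>
        show pushQ (i, true) (pushQ (j, true) ⟦l⟧) = pushQ (j, true) (pushQ (i, true) ⟦l⟧)
        exact Quotient.sound (pushL_comm hInd l.1)
  simp only [map_mul, map_inv, FreeGroup.lift_apply_of]
  rw [mul_inv_eq_one]
  rw [mul_inv_eq_iff_eq_mul]
  exact hcomm

noncomputable def act : Grp k F →* Equiv.Perm (TQ k F) :=
  PresentedGroup.toGroup act_cond

lemma act_sym (α : Fin k × Bool) (t : TQ k F) : act (sym k F α) t = pushQ α t := by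
  obtain ⟨i, b⟩ := α
  cases b
  · have h1 : sym k F (i, false) = (gen k F i)⁻¹ := by simp [sym]
    rw [h1, map_inv]
    have h2 : act (gen k F i) = pushE (i, true) := PresentedGroup.toGroup.of act_cond
    rw [h2]
    rfl
  · have h1 : sym k F (i, true) = gen k F i := by simp [sym]
    rw [h1]
    have h2 : act (gen k F i) = pushE (i, true) := PresentedGroup.toGroup.of act_cond
    rw [h2]
    rfl

def oneT : TQ k F := ⟦⟨[], Red.nil⟩⟧

lemma act_eval : ∀ (l : List (Fin k × Bool)) (hl : Red F l),
    act (wordProd k F l) (oneT : TQ k F) = ⟦⟨l, hl⟩⟧ := by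
  intro l
  induction l with
  | nil =>
      intro hl
      rw [wordProd_nil, map_one]
      rfl
  | cons α t ih =>
      intro hl
      have ht : Red F t := hl.of_cons
      rw [wordProd_cons, map_mul]
      have h1 : (act (sym k F α) * act (wordProd k F t)) (oneT : TQ k F)
          = act (sym k F α) (act (wordProd k F t) oneT) := rfl
      rw [h1, act_sym, ih ht]
      show (⟦⟨pushL F α t, pushL_red ht⟩⟧ : TQ k F) = ⟦⟨α :: t, hl⟩⟧
      apply Quotient.sound
      show Eqv F (pushL F α t) (α :: t)
      rcases pushL_shape (F := F) α t with ⟨t₀, t₁, ht', hind, hp⟩ | ⟨_, t₀, t₁, ht', hind, hp⟩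
      · exact absurd ⟨[], t₀, t₁, α, by simp [ht'], hind⟩ hl
      · rw [hp, ht']
        exact shuffle hind t₁

theorem nft {l m : List (Fin k × Bool)} (hl : Red F l) (hm : Red F m)
    (h : wordProd k F l = wordProd k F m) : Eqv F l m := by
  have h1 := act_eval l hl
  rw [h, act_eval m hm] at h1
  exact (Quotient.exact h1 : Eqv F m l).symm

lemma red_of_geodesic {l : List (Fin k × Bool)} (h : l.length = len (wordProd k F l)) :
    Red F l := by
  rintro ⟨a, b, c, γ, rfl, hind⟩
  have h2 : len (wordProd k F (a ++ γ :: (b ++ invL γ :: c))) ≤ (a ++ (b ++ c)).length :=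
    len_le (bad_delete_prod hind).symm
  simp at h2 h
  omega

lemma reduce_exists_aux : ∀ n (l : List (Fin k × Bool)), l.length ≤ n →
    ∃ m, Red F m ∧ wordProd k F m = wordProd k F l ∧ m.length ≤ l.length := by
  intro n
  induction n with
  | zero =>
      intro l hl
      have : l = [] := List.length_eq_zero_iff.mp (by omega)
      subst this
      exact ⟨[], Red.nil, rfl, le_rfl⟩
  | succ n ih =>
      intro l hl
      by_cases hb : Bad F l
      · obtain ⟨a, b, c, γ, rfl, hind⟩ := hb
        have hlen : (a ++ (b ++ c)).length ≤ n := by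
          have := hl
          simp at this ⊢
          omega
        obtain ⟨m, h1, h2, h3⟩ := ih (a ++ (b ++ c)) hlen
        refine ⟨m, h1, ?_, ?_⟩
        · rw [h2, ← bad_delete_prod hind]
        · simp at h3 ⊢
          omega
      · exact ⟨l, hb, rfl, le_rfl⟩

lemma reduce_exists (l : List (Fin k × Bool)) :
    ∃ m, Red F m ∧ wordProd k F m = wordProd k F l ∧ m.length ≤ l.length :=
  reduce_exists_aux l.length l le_rfl

lemma exists_red_rep (g : Grp k F) :
    ∃ l, Red F l ∧ wordProd k F l = g ∧ l.length = len g := by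
  obtain ⟨m, hm, hmlen⟩ := exists_min_rep g
  obtain ⟨l, h1, h2, h3⟩ := reduce_exists m
  have h4 : len g ≤ l.length := len_le (by rw [h2, hm])
  exact ⟨l, h1, by rw [h2, hm], by omega⟩

lemma red_length {l : List (Fin k × Bool)} (hl : Red F l) :
    l.length = len (wordProd k F l) := by
  obtain ⟨m, h1, h2, h3⟩ := exists_red_rep (wordProd k F l)
  have h4 : Eqv F l m := nft hl h1 h2.symm
  rw [h4.length_eq, h3]

end Dev6

section Dev7

variable {k : ℕ} {F : Set (Sym2 (Fin k))}

@[simp] lemma len_sym (δ : Fin k × Bool) : len (sym k F δ) = 1 := by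
  have := red_length (Red.singleton (F := F) δ)
  simpa using this.symm

lemma sym_ne_one (δ : Fin k × Bool) : sym k F δ ≠ 1 := by
  intro h
  have := len_sym (F := F) δ
  rw [h, len_one] at this
  omega

lemma le_split {A C : List (Fin k × Bool)} {g : Grp k F}
    (hprod : wordProd k F (A ++ C) = g) (hlen : (A ++ C).length = len g) :
    le (wordProd k F A) g ∧ A.length = len (wordProd k F A) ∧
      C.length = len (wordProd k F C) ∧ wordProd k F C = (wordProd k F A)⁻¹ * g := by
  have hC : wordProd k F C = (wordProd k F A)⁻¹ * g := by
    rw [← hprod]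
    simp
  have t1 : len (wordProd k F A) ≤ A.length := len_le rfl
  have t2 : len ((wordProd k F A)⁻¹ * g) ≤ C.length := len_le hC
  have t3 : len g ≤ len (wordProd k F A) + len ((wordProd k F A)⁻¹ * g) :=
    len_le_add_dist _ _
  simp at hlen
  have e1 : len g = len (wordProd k F A) + len ((wordProd k F A)⁻¹ * g) := by omega
  have e2 : A.length = len (wordProd k F A) := by omega
  have e3 : C.length = len ((wordProd k F A)⁻¹ * g) := by omega
  exact ⟨e1, e2, by rw [hC, ← e3], hC⟩

lemma le_concat_red {a g : Grp k F} (hag : le a g) {A C : List (Fin k × Bool)}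
    (hA : wordProd k F A = a) (hAl : A.length = len a)
    (hC : wordProd k F C = a⁻¹ * g) (hCl : C.length = len (a⁻¹ * g)) :
    Red F (A ++ C) ∧ wordProd k F (A ++ C) = g ∧ (A ++ C).length = len g := by
  have hprod : wordProd k F (A ++ C) = g := by
    rw [wordProd_append, hA, hC]
    simp [← mul_assoc]
  have hlen : (A ++ C).length = len g := by
    rw [List.length_append, hAl, hCl]
    exact hag.symm
  exact ⟨red_of_geodesic (by rw [hprod]; exact hlen), hprod, hlen⟩

lemma exists_first_letter {a : Grp k F} (ha : a ≠ 1) : ∃ δ, le (sym k F δ) a := by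
  obtain ⟨l, hred, hprod, hlen⟩ := exists_red_rep a
  rcases l with _ | ⟨δ, t⟩
  · exact absurd hprod.symm ha
  · refine ⟨δ, ?_⟩
    have := (le_split (A := [δ]) (C := t) (by simpa using hprod) (by simpa using hlen)).1
    simpa using this

lemma le_sym_head {δ : Fin k × Bool} {g : Grp k F} (h : le (sym k F δ) g) :
    ∃ T, Red F (δ :: T) ∧ wordProd k F (δ :: T) = g ∧ (δ :: T).length = len g := by
  obtain ⟨C, hCred, hCprod, hClen⟩ := exists_red_rep ((sym k F δ)⁻¹ * g)
  have := le_concat_red h (A := [δ]) (by simp) (by simp) hCprod hClen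
  exact ⟨C, by simpa using this.1, by simpa using this.2.1, by simpa using this.2.2⟩

/-- extraction of a first letter from an arbitrary equivalent word -/
lemma extraction {δ : Fin k × Bool} : ∀ {T L : List (Fin k × Bool)},
    Eqv F (δ :: T) L →
    ∃ L₀ L₁, L = L₀ ++ δ :: L₁ ∧ (∀ β ∈ L₀, Ind F δ β) ∧ Eqv F (L₀ ++ L₁) T := by
  intro T L h
  induction h with
  | refl => exact ⟨[], T, rfl, by simp, Eqv.refl _⟩
  | tail hMN hstep ih =>
      obtain ⟨M₀, M₁, rfl, hind, hrem⟩ := ih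
      obtain ⟨u, v, α, β, hαβ, hM, hL⟩ := hstep
      rcases cons_middle_split (u := u) (v := α :: β :: v) (x := M₀) (y := M₁) hM.symm with
        ⟨y₁, hu, hM₁⟩ | ⟨x₁, hx, hM₀⟩
      · -- δ occurs inside u : swap happens inside M₁
        subst hu
        refine ⟨M₀, y₁ ++ β :: α :: v, by rw [hL]; simp, hind, ?_⟩
        have hstep' : Step F (M₀ ++ (y₁ ++ α :: β :: v)) (M₀ ++ (y₁ ++ β :: α :: v)) :=
          ⟨M₀ ++ y₁, v, α, β, hαβ, by simp, by simp⟩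
        refine Eqv.trans (Eqv.single hstep'.symm) ?_
        rw [← hM₁]
        exact hrem
      · -- the swap window touches or follows the δ position
        rcases x₁ with _ | ⟨a₁, x₁⟩
        · -- α = δ
          simp at hx
          obtain ⟨h5, h6⟩ := hx
          subst h6
          simp at hM₀
          refine ⟨M₀ ++ [β], v, ?_, ?_, ?_⟩
          · rw [hL, hM₀, ← h5]
            simp
          · intro γ hγ
            rcases List.mem_append.mp hγ with hγ | hγ
            · exact hind γ hγ
            · simp at hγ
              subst hγ
              rw [← h5]
              exact hαβ
          · have h3 : M₀ ++ [β] ++ v = M₀ ++ β :: v := by simp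
            rw [h3]
            exact hrem
        · rcases x₁ with _ | ⟨a₂, x₁⟩
          · -- β = δ
            simp at hx
            obtain ⟨h5, h6, h7⟩ := hx
            subst h5
            subst h7
            refine ⟨u, α :: v, ?_, ?_, ?_⟩
            · rw [hL, ← h6]
            · intro γ hγ
              exact hind γ (by simp [hM₀, hγ])
            · have h2 : u ++ α :: v = M₀ ++ v := by rw [hM₀]; simp
              rw [h2]
              exact hrem
          · -- the swap is entirely before the δ position
            simp at hx
            obtain ⟨h5, h6, h7⟩ := hx
            subst h5
            subst h6
            subst h7
            refine ⟨u ++ β :: α :: x₁, M₁, by rw [hL]; simp, ?_, ?_⟩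
            · intro γ hγ
              simp at hγ
              rcases hγ with hγ | rfl | rfl | hγ
              · exact hind γ (by simp [hM₀, hγ])
              · exact hind γ (by simp [hM₀])
              · exact hind γ (by simp [hM₀])
              · exact hind γ (by simp [hM₀, hγ])
            · have hstep' : Step F (u ++ α :: β :: x₁ ++ M₁) (u ++ β :: α :: x₁ ++ M₁) :=
                ⟨u, x₁ ++ M₁, α, β, hαβ, by simp, by simp⟩
              refine Eqv.trans (Eqv.single hstep'.symm) ?_
              have h2 : u ++ α :: β :: x₁ ++ M₁ = M₀ ++ M₁ := by simp [hM₀]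
              rw [h2]
              exact hrem

/-- extraction of a letter below `g` from any reduced word for `g` -/
lemma extract_letter {δ : Fin k × Bool} {g : Grp k F} (h : le (sym k F δ) g)
    {L : List (Fin k × Bool)} (hL : Red F L) (hLp : wordProd k F L = g) :
    ∃ L₀ L₁, L = L₀ ++ δ :: L₁ ∧ (∀ β ∈ L₀, Ind F δ β) ∧
      wordProd k F (L₀ ++ L₁) = (sym k F δ)⁻¹ * g ∧ Red F (L₀ ++ L₁) ∧
      (L₀ ++ L₁).length = len ((sym k F δ)⁻¹ * g) := by
  obtain ⟨T, hTred, hTprod, hTlen⟩ := le_sym_head h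
  have heqv : Eqv F (δ :: T) L := nft hTred hL (by rw [hTprod, hLp])
  obtain ⟨L₀, L₁, hsplit, hind, _⟩ := extraction heqv
  have hprod : wordProd k F (L₀ ++ L₁) = (sym k F δ)⁻¹ * g := by
    have h2 : wordProd k F L = sym k F δ * wordProd k F (L₀ ++ L₁) := by
      rw [hsplit]
      have hcomm := commute_wordProd (F := F) (α := δ) (l := L₀) hind
      simp only [wordProd_append, wordProd_cons]
      rw [← mul_assoc, ← hcomm.eq, mul_assoc]
    rw [← hLp, h2]
    group
  have hLlen : L.length = len g := by rw [red_length hL, hLp]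
  have hlen2 : (L₀ ++ L₁).length = len ((sym k F δ)⁻¹ * g) := by
    have e1 : L.length = (L₀ ++ L₁).length + 1 := by rw [hsplit]; simp; omega
    have e2 : len g = 1 + len ((sym k F δ)⁻¹ * g) := by
      have := h
      unfold le at this
      rw [len_sym] at this
      exact this
    omega
  exact ⟨L₀, L₁, hsplit, hind, hprod, red_of_geodesic (by rw [hprod]; exact hlen2), hlen2⟩

end Dev7

section Dev8

variable {k : ℕ} {F : Set (Sym2 (Fin k))}

lemma le_head {δ : Fin k × Bool} {W : List (Fin k × Bool)} {g : Grp k F}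
    (hprod : wordProd k F (δ :: W) = g) (hlen : (δ :: W).length = len g) :
    le (sym k F δ) g := by
  have := (le_split (A := [δ]) (C := W) (by simpa using hprod) (by simpa using hlen)).1
  simpa using this

lemma bad_split {A B : List (Fin k × Bool)} (hA : Red F A) (hB : Red F B)
    (hbad : Bad F (A ++ B)) :
    ∃ γ a' b₁ b₂ c', A = a' ++ γ :: b₁ ∧ B = b₂ ++ invL γ :: c' ∧
      (∀ β ∈ b₁, Ind F γ β) ∧ (∀ β ∈ b₂, Ind F γ β) := by
  obtain ⟨a, b, c, γ, heq, hind⟩ := hbad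
  rcases cons_middle_split heq with ⟨y₁, hA', h2⟩ | ⟨x₁, hB', _⟩
  · rcases cons_middle_split h2.symm with ⟨c₁, hy₁, _⟩ | ⟨b₂, hB', hb⟩
    · exact absurd ⟨a, b, c₁, γ, by rw [hA', hy₁], hind⟩ hA
    · exact ⟨γ, a, y₁, b₂, c, hA', hB', fun β hβ => hind β (by simp [hb, hβ]),
        fun β hβ => hind β (by simp [hb, hβ])⟩
  · exact absurd ⟨x₁, b, c, γ, hB', hind⟩ hB

lemma invW_ind {γ : Fin k × Bool} {l : List (Fin k × Bool)} (h : ∀ β ∈ l, Ind F γ β) :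
    ∀ β ∈ invW l, Ind F (invL γ) β := by
  intro β hβ
  rw [invW, List.mem_reverse, List.mem_map] at hβ
  obtain ⟨β', hβ', rfl⟩ := hβ
  exact h β' hβ' 

/-- key cancellation anatomy: a shortening product exhibits a common letter -/
lemma anat {a b : Grp k F} (h : len (a * b) < len a + len b) :
    ∃ δ, le (sym k F δ) a⁻¹ ∧ le (sym k F δ) b := by
  obtain ⟨A, hAred, hAprod, hAlen⟩ := exists_red_rep a
  obtain ⟨B, hBred, hBprod, hBlen⟩ := exists_red_rep b
  have hprodAB : wordProd k F (A ++ B) = a * b := by rw [wordProd_append, hAprod, hBprod]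
  have hbad : Bad F (A ++ B) := by
    by_contra hred
    have := red_length (l := A ++ B) hred
    rw [hprodAB] at this
    simp [hAlen, hBlen] at this
    omega
  obtain ⟨γ, a', b₁, b₂, c', hA, hB, h1, h2⟩ := bad_split hAred hBred hbad
  refine ⟨invL γ, ?_, ?_⟩
  · -- a⁻¹ has a geodesic word starting with invL γ
    have hword : wordProd k F (invL γ :: (invW b₁ ++ invW a')) = a⁻¹ := by
      have hc : Commute (sym k F (invL γ)) (wordProd k F (invW b₁)) :=
        commute_wordProd (invW_ind h1)
      have hAinv : wordProd k F (invW A) =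
          wordProd k F (invW b₁) * (sym k F (invL γ) * wordProd k F (invW a')) := by
        rw [hA, invW_append, invW_cons]
        simp [mul_assoc]
      rw [← hAprod, ← wordProd_invW, hAinv, wordProd_cons, wordProd_append,
        ← mul_assoc, hc.eq, mul_assoc]
    apply le_head hword
    have : (invL γ :: (invW b₁ ++ invW a')).length = A.length := by
      rw [hA]; simp
      omega
    rw [this, hAlen, len_inv]
  · have hword : wordProd k F (invL γ :: (b₂ ++ c')) = b := by
      have hc : Commute (sym k F (invL γ)) (wordProd k F b₂) := by
        apply commute_wordProd
        intro β hβ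
        have := h2 β hβ
        simpa using this
      have hBsplit : wordProd k F B =
          wordProd k F b₂ * (sym k F (invL γ) * wordProd k F c') := by
        rw [hB]
        simp [mul_assoc]
      rw [← hBprod, hBsplit, wordProd_cons, wordProd_append, ← mul_assoc, hc.eq, mul_assoc]
    apply le_head hword
    have : (invL γ :: (b₂ ++ c')).length = B.length := by
      rw [hB]; simp
      omega
    rw [this, hBlen]

/-- meets with trivial intersection: lengths add (Lemma M1) -/
lemma meet_one_len {a b : Grp k F} (h : ∀ t, le t a → le t b → t = 1) :
    len (a⁻¹ * b) = len a + len b := by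
  have hle : len (a⁻¹ * b) ≤ len a + len b := by
    have := len_mul_le a⁻¹ b
    simpa using this
  rcases Nat.lt_or_ge (len (a⁻¹ * b)) (len a + len b) with hlt | hge
  · exfalso
    have h2 : len (a⁻¹ * b) < len a⁻¹ + len b := by simpa using hlt
    obtain ⟨δ, hδ1, hδ2⟩ := anat h2
    rw [inv_inv] at hδ1
    exact sym_ne_one δ (h _ hδ1 hδ2)
  · omega

/-- M3 : cancelling the meet leaves trivially-intersecting elements -/
lemma meet_cancel {x y m : Grp k F} (hm : IsMeet x y m) :
    ∀ t, le t (m⁻¹ * x) → le t (m⁻¹ * y) → t = 1 := by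
  intro t h1 h2
  obtain ⟨c1a, c1b⟩ := le_compose hm.1 h1
  obtain ⟨c2a, _⟩ := le_compose hm.2.1 h2
  have h3 : le (m * t) m := hm.2.2 _ c1a c2a
  have h4 : m * t = m := le_antisymm' h3 c1b
  have : m * t = m * 1 := by simpa using h4
  exact mul_left_cancel this

/-- the meet lies on a geodesic between the two elements -/
lemma meet_between {x y m : Grp k F} (hm : IsMeet x y m) :
    len (x⁻¹ * y) = len (m⁻¹ * x) + len (m⁻¹ * y) := by
  have h := meet_one_len (meet_cancel hm)
  have e : (m⁻¹ * x)⁻¹ * (m⁻¹ * y) = x⁻¹ * y := by group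
  rw [e] at h
  exact h

lemma le_y_meet {x y m : Grp k F} (hm : IsMeet x y m) : le (y⁻¹ * m) (y⁻¹ * x) := by
  unfold le
  have e1 : (y⁻¹ * m)⁻¹ * (y⁻¹ * x) = m⁻¹ * x := by group
  rw [e1]
  have h2 := meet_between hm
  have e2 : len (y⁻¹ * x) = len (x⁻¹ * y) := by
    rw [← len_inv (y⁻¹ * x)]; congr 1; group
  have e3 : len (y⁻¹ * m) = len (m⁻¹ * y) := by
    rw [← len_inv (y⁻¹ * m)]; congr 1; group
  omega

end Dev8

section Dev9

variable {k : ℕ} {F : Set (Sym2 (Fin k))}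

lemma mem_invW {γ : Fin k × Bool} {l : List (Fin k × Bool)} :
    γ ∈ invW l ↔ invL γ ∈ l := by
  rw [invW, List.mem_reverse, List.mem_map]
  constructor
  · rintro ⟨β, hβ, rfl⟩
    simpa using hβ
  · intro h
    exact ⟨invL γ, h, by simp⟩

lemma bad_invW {l : List (Fin k × Bool)} (h : Bad F l) : Bad F (invW l) := by
  obtain ⟨a, b, c, γ, rfl, hind⟩ := h
  refine ⟨invW c, invW b, invW a, γ, ?_, ?_⟩
  · rw [invW_append, invW_cons, invW_append, invW_cons]
    simp
  · intro β hβ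
    rw [mem_invW] at hβ
    exact hind (invL β) hβ

lemma red_invW {l : List (Fin k × Bool)} (h : Red F l) : Red F (invW l) := by
  intro hb
  exact h (by simpa using bad_invW hb)

/-- Levi's lemma for swap-equivalence -/
lemma levi : ∀ (M₁ : List (Fin k × Bool)) {L₁ L₂ M₂ : List (Fin k × Bool)},
    Eqv F (L₁ ++ L₂) (M₁ ++ M₂) →
    ∃ p q r s, Eqv F L₁ (p ++ q) ∧ Eqv F L₂ (r ++ s) ∧ Eqv F M₁ (p ++ r) ∧
      Eqv F M₂ (q ++ s) ∧ ∀ γ ∈ q, ∀ β ∈ r, Ind F γ β := by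
  intro M₁
  induction M₁ with
  | nil =>
      intro L₁ L₂ M₂ h
      exact ⟨[], L₁, [], L₂, by simpa using Eqv.refl L₁, by simpa using Eqv.refl L₂,
        Eqv.refl [], by simpa using h.symm, by simp⟩
  | cons δ M₁' ih =>
      intro L₁ L₂ M₂ h
      have h2 : Eqv F (δ :: (M₁' ++ M₂)) (L₁ ++ L₂) := by simpa using h.symm
      obtain ⟨L₀, L₁'', hsplit, hind, hrem⟩ := extraction h2
      rcases cons_middle_split hsplit with ⟨y₁, hL₁, hL₁''⟩ | ⟨x₁, hL₂, hL₀⟩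
      · -- δ sits inside L₁
        have h3 : Eqv F ((L₀ ++ y₁) ++ L₂) (M₁' ++ M₂) := by
          have e : (L₀ ++ y₁) ++ L₂ = L₀ ++ L₁'' := by rw [hL₁'']; simp
          rw [e]
          exact hrem
        obtain ⟨p', q, r, s, e1, e2, e3, e4, hqr⟩ := ih h3
        refine ⟨δ :: p', q, r, s, ?_, e2, ?_, e4, hqr⟩
        · have e5 : Eqv F L₁ (δ :: (L₀ ++ y₁)) := by
            rw [hL₁]
            exact shuffle hind y₁
          exact e5.trans (e1.cons_congr δ)
        · exact e3.cons_congr δ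
      · -- δ sits inside L₂
        have h3 : Eqv F (L₁ ++ (x₁ ++ L₁'')) (M₁' ++ M₂) := by
          have e : L₁ ++ (x₁ ++ L₁'') = L₀ ++ L₁'' := by rw [hL₀]; simp
          rw [e]
          exact hrem
        obtain ⟨p, q, r', s, e1, e2, e3, e4, hqr⟩ := ih h3
        have hpδ : ∀ β ∈ p, Ind F δ β := by
          intro β hβ
          have hβ2 : β ∈ L₁ := e1.symm.mem (by simp [hβ])
          exact hind β (by simp [hL₀, hβ2])
        refine ⟨p, q, δ :: r', s, e1, ?_, ?_, e4, ?_⟩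
        · have e5 : Eqv F L₂ (δ :: (x₁ ++ L₁'')) := by
            have hx₁δ : ∀ β ∈ x₁, Ind F δ β := fun β hβ => hind β (by simp [hL₀, hβ])
            rw [hL₂]
            exact shuffle hx₁δ L₁''
          have e6 : Eqv F (δ :: (x₁ ++ L₁'')) (δ :: (r' ++ s)) := e2.cons_congr δ
          exact e5.trans e6
        · have e7 : Eqv F (δ :: M₁') (δ :: (p ++ r')) := e3.cons_congr δ
          exact e7.trans (shuffle hpδ r').symm
        · intro γ hγ β hβ
          rcases List.mem_cons.mp hβ with rfl | hβ
          · have hγ2 : γ ∈ L₁ := e1.symm.mem (by simp [hγ])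
            exact (hind γ (by simp [hL₀, hγ2])).symm
          · exact hqr γ hγ β hβ

end Dev9

section Dev10

variable {k : ℕ} {F : Set (Sym2 (Fin k))}

lemma len_inv_mul (a b : Grp k F) : len (a⁻¹ * b) = len (b⁻¹ * a) := by
  rw [← len_inv (a⁻¹ * b)]
  congr 1
  group

/-- STATEMENT (i) : the meet of the endpoints lies below the midpoint -/
theorem meet_le_mid {x y z m : Grp k F}
    (hU : ∀ t, le t (y⁻¹ * x) → le t (y⁻¹ * z) → t = 1)
    (h1 : IsMeet x z m) : le m y := by
  have hBm : len (x⁻¹ * z) = len (m⁻¹ * x) + len (m⁻¹ * z) := meet_between h1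
  have hByz : len (x⁻¹ * z) = len (y⁻¹ * x) + len (y⁻¹ * z) := by
    have h2 := meet_one_len hU
    have e : (y⁻¹ * x)⁻¹ * (y⁻¹ * z) = x⁻¹ * z := by group
    rw [e] at h2
    exact h2
  obtain ⟨A, hAred, hAprod, hAlen⟩ := exists_red_rep (x⁻¹ * m)
  obtain ⟨C, hCred, hCprod, hClen⟩ := exists_red_rep (m⁻¹ * z)
  obtain ⟨U, hUred, hUprod, hUlen⟩ := exists_red_rep (x⁻¹ * y)
  obtain ⟨V, hVred, hVprod, hVlen⟩ := exists_red_rep (y⁻¹ * z)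
  have hACprod : wordProd k F (A ++ C) = x⁻¹ * z := by
    rw [wordProd_append, hAprod, hCprod]
    group
  have hAClen : (A ++ C).length = len (x⁻¹ * z) := by
    rw [List.length_append, hAlen, hClen, len_inv_mul x m, hBm]
  have hUVprod : wordProd k F (U ++ V) = x⁻¹ * z := by
    rw [wordProd_append, hUprod, hVprod]
    group
  have hUVlen : (U ++ V).length = len (x⁻¹ * z) := by
    rw [List.length_append, hUlen, hVlen, len_inv_mul x y, hByz]
  have heqv : Eqv F (A ++ C) (U ++ V) :=
    nft (red_of_geodesic (by rw [hACprod]; exact hAClen))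
      (red_of_geodesic (by rw [hUVprod]; exact hUVlen))
      (by rw [hACprod, hUVprod])
  obtain ⟨p, q, r, s, e1, e2, e3, e4, hqr⟩ := levi U heqv
  -- the four corner products
  have hxm : x⁻¹ * m = wordProd k F p * wordProd k F q := by
    rw [← hAprod, e1.prod_eq, wordProd_append]
  have hmz : m⁻¹ * z = wordProd k F r * wordProd k F s := by
    rw [← hCprod, e2.prod_eq, wordProd_append]
  have hxy : x⁻¹ * y = wordProd k F p * wordProd k F r := by
    rw [← hUprod, e3.prod_eq, wordProd_append]
  -- reducedness of the pieces
  have hpq_red : Red F (p ++ q) := red_of_geodesic (by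
    rw [← e1.prod_eq, ← e1.length_eq, hAprod, hAlen])
  have hrs_red : Red F (r ++ s) := red_of_geodesic (by
    rw [← e2.prod_eq, ← e2.length_eq, hCprod, hClen])
  have hq_red : Red F q := hpq_red.of_append_right
  have hr_red : Red F r := hrs_red.of_append_left
  have hqir_red : Red F (invW q ++ r) := by
    intro hbad
    obtain ⟨γ, a', b₁, b₂, c', hq', hr', _, _⟩ := bad_split (red_invW hq_red) hr_red hbad
    have hγq : invL γ ∈ q := mem_invW.mp (by rw [hq']; simp)
    have hγr : invL γ ∈ r := by rw [hr']; simp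
    exact not_Ind_self (invL γ) (hqr _ hγq _ hγr)
  have hmy : m⁻¹ * y = (wordProd k F q)⁻¹ * wordProd k F r := by
    have e : m⁻¹ * y = (x⁻¹ * m)⁻¹ * (x⁻¹ * y) := by group
    rw [e, hxm, hxy]
    group
  have hmyprod : wordProd k F (invW q ++ r) = m⁻¹ * y := by
    rw [wordProd_append, wordProd_invW, hmy]
  have hlen_my : len (m⁻¹ * y) = q.length + r.length := by
    have := red_length hqir_red
    rw [hmyprod] at this
    simp at this
    omega
  -- the triangle inequality
  have htri : len y ≤ len m + len (m⁻¹ * y) := len_le_add_dist m y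
  rcases Nat.lt_or_ge (len y) (len m + len (m⁻¹ * y)) with hlt | hge
  · exfalso
    obtain ⟨M, hMred, hMprod, hMlen⟩ := exists_red_rep m
    have hWyprod : wordProd k F (M ++ (invW q ++ r)) = y := by
      rw [wordProd_append, hMprod, hmyprod]
      group
    have hbad : Bad F (M ++ (invW q ++ r)) := by
      by_contra hred
      have h5 := red_length (l := M ++ (invW q ++ r)) hred
      rw [hWyprod] at h5
      simp [hMlen] at h5
      omega
    obtain ⟨γ, a', b₁, b₂, c', hM, hqr', hb₁, hb₂⟩ :=
      bad_split hMred hqir_red hbad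
    rcases cons_middle_split hqr' with ⟨y₁, hq2, hc'⟩ | ⟨e', hr2, hb₂2⟩
    · -- the cancelling partner sits in q⁻¹ : contradiction with geodesy of x
      have hmx : m⁻¹ * x = (wordProd k F q)⁻¹ * (wordProd k F p)⁻¹ := by
        have e : m⁻¹ * x = (x⁻¹ * m)⁻¹ := by group
        rw [e, hxm]
        group
      have hWxprod : wordProd k F (M ++ (invW q ++ invW p)) = x := by
        rw [wordProd_append, wordProd_append, wordProd_invW, wordProd_invW, hMprod, ← hmx]
        group
      have hWxlen : (M ++ (invW q ++ invW p)).length = len x := by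
        have h6 : p.length + q.length = len (m⁻¹ * x) := by
          have := e1.length_eq
          rw [hAlen] at this
          simp at this
          rw [← len_inv_mul]
          omega
        have h7 : len x = len m + len (m⁻¹ * x) := h1.1
        simp [hMlen]
        omega
      have hWx_red : Red F (M ++ (invW q ++ invW p)) :=
        red_of_geodesic (by rw [hWxprod]; exact hWxlen)
      apply hWx_red
      refine ⟨a', b₁ ++ b₂, y₁ ++ invW p, γ, ?_, ?_⟩
      · rw [hM, hq2]
        simp
      · intro β hβ
        rcases List.mem_append.mp hβ with hβ | hβ
        · exact hb₁ β hβ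
        · exact hb₂ β hβ
    · -- the cancelling partner sits in r : contradiction with geodesy of z
      have hWzprod : wordProd k F (M ++ (r ++ s)) = z := by
        rw [wordProd_append, wordProd_append, hMprod, ← hmz]
        group
      have hWzlen : (M ++ (r ++ s)).length = len z := by
        have h6 : r.length + s.length = len (m⁻¹ * z) := by
          have := e2.length_eq
          rw [hClen] at this
          simp at this
          omega
        have h7 : len z = len m + len (m⁻¹ * z) := h1.2.1
        simp [hMlen]
        omega
      have hWz_red : Red F (M ++ (r ++ s)) :=
        red_of_geodesic (by rw [hWzprod]; exact hWzlen)
      apply hWz_red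
      refine ⟨a', b₁ ++ e', c' ++ s, γ, ?_, ?_⟩
      · rw [hM, hr2]
        simp
      · intro β hβ
        rcases List.mem_append.mp hβ with hβ | hβ
        · exact hb₁ β hβ
        · exact hb₂ β (by simp [hb₂2, hβ])
  · unfold le
    omega

end Dev10

section Dev11

variable {k : ℕ} {F : Set (Sym2 (Fin k))}

lemma le_lift {δ : Fin k × Bool} {y w : Grp k F} (h1 : le (sym k F δ) w)
    (h2 : le ((sym k F δ)⁻¹ * y) ((sym k F δ)⁻¹ * w)) : le y w := by
  have h3 := (le_compose h1 h2).1
  rwa [show sym k F δ * ((sym k F δ)⁻¹ * y) = y by group] at h3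

lemma eq_of_inv_mul_eq_one {y b : Grp k F} (h : y⁻¹ * b = 1) : y = b :=
  inv_mul_eq_one.mp h

/-- STATEMENT (ii') : `y` is below any common upper bound of `a,b` when the
complements of `a` and `b` in `y` have trivial meet. -/
theorem join_upper : ∀ n : ℕ, ∀ {y a b w : Grp k F}, len y ≤ n → le a y → le b y →
    (∀ t, le t (y⁻¹ * a) → le t (y⁻¹ * b) → t = 1) → le a w → le b w → le y w := by
  intro n
  induction n with
  | zero =>
      intro y a b w hn hay hby hU haw hbw
      have hy : y = 1 := eq_one_of_len_eq_zero (by omega)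
      subst hy
      exact one_le' w
  | succ n ih =>
      intro y a b w hn hay hby hU haw hbw
      by_cases ha : a = 1
      · subst ha
        have h2 : le (y⁻¹ * b) (y⁻¹ * 1) := by
          unfold le
          have e1 : (y⁻¹ * b)⁻¹ * (y⁻¹ * 1) = b⁻¹ := by group
          have e2 : len (y⁻¹ * 1) = len y := by rw [mul_one, len_inv]
          rw [e1, e2, len_inv]
          have e3 : len (y⁻¹ * b) = len (b⁻¹ * y) := len_inv_mul y b
          have e4 := hby
          unfold le at e4
          omega
        have h3 := hU _ h2 (le_rfl' _)
        have h4 : y = b := eq_of_inv_mul_eq_one h3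
        subst h4
        exact hbw
      · by_cases hb : b = 1
        · subst hb
          have h2 : le (y⁻¹ * a) (y⁻¹ * 1) := by
            unfold le
            have e1 : (y⁻¹ * a)⁻¹ * (y⁻¹ * 1) = a⁻¹ := by group
            have e2 : len (y⁻¹ * 1) = len y := by rw [mul_one, len_inv]
            rw [e1, e2, len_inv]
            have e3 : len (y⁻¹ * a) = len (a⁻¹ * y) := len_inv_mul y a
            have e4 := hay
            unfold le at e4
            omega
          have h3 := hU _ (le_rfl' _) h2
          have h4 : y = a := eq_of_inv_mul_eq_one h3
          subst h4
          exact haw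
        · have hylen1 : 1 ≤ len y := by
            have h5 : len a ≠ 0 := fun h0 => ha (eq_one_of_len_eq_zero h0)
            have h6 := hay
            unfold le at h6
            omega
          by_cases hc : ∃ δ, le (sym k F δ) a ∧ le (sym k F δ) b
          · obtain ⟨δ, hδa, hδb⟩ := hc
            have hδy := le_trans' hδa hay
            have hδw := le_trans' hδa haw
            have hay' := le_cancel hδa hay
            have haw' := le_cancel hδa haw
            have hby' := le_cancel hδb hby
            have hbw' := le_cancel hδb hbw
            have hU' : ∀ t, le t (((sym k F δ)⁻¹ * y)⁻¹ * ((sym k F δ)⁻¹ * a)) →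
                le t (((sym k F δ)⁻¹ * y)⁻¹ * ((sym k F δ)⁻¹ * b)) → t = 1 := by
              intro t h1t h2t
              apply hU t
              · rwa [show ((sym k F δ)⁻¹ * y)⁻¹ * ((sym k F δ)⁻¹ * a) = y⁻¹ * a by group]
                  at h1t
              · rwa [show ((sym k F δ)⁻¹ * y)⁻¹ * ((sym k F δ)⁻¹ * b) = y⁻¹ * b by group]
                  at h2t
            have hlen' : len ((sym k F δ)⁻¹ * y) ≤ n := by
              have h6 := hδy
              unfold le at h6
              rw [len_sym] at h6
              omega
            exact le_lift hδw (ih hlen' hay' hby' hU' haw' hbw')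
          · obtain ⟨δ, hδa⟩ := exists_first_letter ha
            have hδb : ¬ le (sym k F δ) b := fun hh => hc ⟨δ, hδa, hh⟩
            have hδy := le_trans' hδa hay
            have hδw := le_trans' hδa haw
            obtain ⟨B, hBred, hBprod, hBlen⟩ := exists_red_rep b
            -- analysis in y
            obtain ⟨Ry, _, hRyprod, hRylen⟩ := exists_red_rep (b⁻¹ * y)
            obtain ⟨hBRred, hBRprod, hBRlen⟩ := le_concat_red hby hBprod hBlen hRyprod hRylen
            obtain ⟨L₀, L₁, hsplit, hind, hLprod, hLred, hLlen⟩ :=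
              extract_letter hδy hBRred hBRprod
            rcases cons_middle_split hsplit with ⟨y₁, hB2, _⟩ | ⟨R₀, hRy2, hL₀⟩
            · exfalso
              apply hδb
              have hindB : ∀ β ∈ L₀, Ind F δ β := hind
              have h5 : wordProd k F (δ :: (L₀ ++ y₁)) = b := by
                rw [← hBprod, hB2]
                simp only [wordProd_cons, wordProd_append]
                rw [← mul_assoc, (commute_wordProd hindB).eq, mul_assoc]
              apply le_head h5
              have h6 : (δ :: (L₀ ++ y₁)).length = B.length := by
                rw [hB2]
                simp
                omega
              rw [h6, hBlen]
            · -- δ passes over b inside y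
              have hby' : le b ((sym k F δ)⁻¹ * y) := by
                have e : L₀ ++ L₁ = B ++ (R₀ ++ L₁) := by rw [hL₀]; simp
                rw [e] at hLprod hLlen
                have := (le_split hLprod hLlen).1
                rwa [hBprod] at this
              have hBδ : ∀ β ∈ B, Ind F δ β := fun β hβ => hind β (by simp [hL₀, hβ])
              have hcommb : Commute (sym k F δ) b := by
                rw [← hBprod]
                exact commute_wordProd hBδ
              -- analysis in w
              obtain ⟨Sw, _, hSwprod, hSwlen⟩ := exists_red_rep (b⁻¹ * w)
              obtain ⟨hBSred, hBSprod, hBSlen⟩ := le_concat_red hbw hBprod hBlen hSwprod hSwlen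
              obtain ⟨K₀, K₁, hsplitw, hindw, hKprod, hKred, hKlen⟩ :=
                extract_letter hδw hBSred hBSprod
              rcases cons_middle_split hsplitw with ⟨w₁, hB3, _⟩ | ⟨S₀, hSw2, hK₀⟩
              · exfalso
                apply hδb
                have h5 : wordProd k F (δ :: (K₀ ++ w₁)) = b := by
                  rw [← hBprod, hB3]
                  simp only [wordProd_cons, wordProd_append]
                  rw [← mul_assoc, (commute_wordProd hindw).eq, mul_assoc]
                apply le_head h5
                have h6 : (δ :: (K₀ ++ w₁)).length = B.length := by
                  rw [hB3]
                  simp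
                  omega
                rw [h6, hBlen]
              · have hbw' : le b ((sym k F δ)⁻¹ * w) := by
                  have e : K₀ ++ K₁ = B ++ (S₀ ++ K₁) := by rw [hK₀]; simp
                  rw [e] at hKprod hKlen
                  have := (le_split hKprod hKlen).1
                  rwa [hBprod] at this
                -- a-side cancellation
                have hay' := le_cancel hδa hay
                have haw' := le_cancel hδa haw
                -- the new meet condition
                have hUb : le (((sym k F δ)⁻¹ * y)⁻¹ * b) (y⁻¹ * b) := by
                  unfold le
                  have e0 : ((((sym k F δ)⁻¹ * y)⁻¹ * b)⁻¹ * (y⁻¹ * b))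
                      = b⁻¹ * ((sym k F δ)⁻¹ * b) := by group
                  have e0' : b⁻¹ * ((sym k F δ)⁻¹ * b) = (sym k F δ)⁻¹ := by
                    rw [hcommb.inv_left.eq]
                    group
                  rw [e0, e0', len_inv, len_sym]
                  have l1 : len (((sym k F δ)⁻¹ * y)⁻¹ * b)
                      = len (b⁻¹ * ((sym k F δ)⁻¹ * y)) := len_inv_mul _ _
                  have l2 := hby'
                  unfold le at l2
                  have l3 := hby
                  unfold le at l3
                  have l4 := hδy
                  unfold le at l4
                  rw [len_sym] at l4
                  have l5 : len (y⁻¹ * b) = len (b⁻¹ * y) := len_inv_mul _ _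
                  omega
                have hU' : ∀ t, le t (((sym k F δ)⁻¹ * y)⁻¹ * ((sym k F δ)⁻¹ * a)) →
                    le t (((sym k F δ)⁻¹ * y)⁻¹ * b) → t = 1 := by
                  intro t h1t h2t
                  apply hU t
                  · rwa [show ((sym k F δ)⁻¹ * y)⁻¹ * ((sym k F δ)⁻¹ * a) = y⁻¹ * a by group]
                      at h1t
                  · exact le_trans' h2t hUb
                have hlen' : len ((sym k F δ)⁻¹ * y) ≤ n := by
                  have h6 := hδy
                  unfold le at h6
                  rw [len_sym] at h6
                  omega
                exact le_lift hδw (ih hlen' hay' hby' hU' haw' hbw')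

end Dev11

/-- if `y⁻¹x ∧ y⁻¹z = 1`, then the joins involved are finite and
`(x ∧ z) ∨ (x ∧ y) ∨ (y ∧ z) = y`. -/
theorem stmt3 {k : ℕ} (hk : 1 ≤ k) {F : Set (Sym2 (Fin k))} (x y z : Grp k F)
    (h : IsMeet (y⁻¹ * x) (y⁻¹ * z) 1)
    (mxz mxy myz : Grp k F)
    (h1 : IsMeet x z mxz) (h2 : IsMeet x y mxy) (h3 : IsMeet y z myz) :
    ∃ j, IsJoin mxz mxy j ∧ IsJoin j myz y := by
  have hU : ∀ t, le t (y⁻¹ * x) → le t (y⁻¹ * z) → t = 1 :=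
    fun t ht1 ht2 => le_one' (h.2.2 t ht1 ht2)
  have hmle_y : le mxz y := meet_le_mid hU h1
  have hmle : le mxz mxy := h2.2.2 mxz h1.1 hmle_y
  have hm2u : le (y⁻¹ * mxy) (y⁻¹ * x) := le_y_meet h2
  have h3' : IsMeet z y myz := ⟨h3.2.1, h3.1, fun w hw1 hw2 => h3.2.2 w hw2 hw1⟩
  have hm3u : le (y⁻¹ * myz) (y⁻¹ * z) := le_y_meet h3'
  have hUb : ∀ t, le t (y⁻¹ * mxy) → le t (y⁻¹ * myz) → t = 1 :=
    fun t ht1 ht2 => hU t (le_trans' ht1 hm2u) (le_trans' ht2 hm3u)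
  exact ⟨mxy, ⟨hmle, le_rfl' mxy, fun w _ hw2 => hw2⟩,
    ⟨h2.2.1, h3.1, fun w hw1 hw2 =>
      join_upper (len y) (Nat.le_refl _) h2.2.1 h3.1 hUb hw1 hw2⟩⟩

end GraphGroupPaper
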